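/- Let n ≥ 1 be an integer, let x_1,…,x_n be nonzero complex numbers, and let c_1,…,c_{n+1} ∈ ℂ. For each j = 1,…,n let P_{j−1} be a complex polynomial of degree at most j−1. Then det_{1≤i,j≤n}( x_i^{−j} ∏_{k=1}^{n+1} (1 − c_k x_i) · P_{j−1}(x_i) − x_i^{j} ∏_{k=1}^{n+1} (1 − c_k/x_i) · P_{j−1}(1/x_i) ) = ∏_{i=1}^{n} P_{i−1}(0) · ∏_{1≤i<j≤n+1} (1 − c_i c_j) · ∏_{i=1}^{n} x_i^{−n} (1 − x_i^2) · ∏_{1≤i<j≤n} (x_i − x_j)(1 − x_i x_j). -/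

import Mathlib

open Finset Polynomial

namespace Stmt17


noncomputable def S : ℕ → Polynomial ℂ
  | 0 => 1
  | 1 => Polynomial.X
  | (m+2) => Polynomial.X * S (m+1) - S m

lemma S_add_two (m : ℕ) : S (m+2) = Polynomial.X * S (m+1) - S m := rfl

lemma S_spec : ∀ m : ℕ, (S m).Monic ∧ (S m).natDegree = m := by
  have key : ∀ m : ℕ, ((S m).Monic ∧ (S m).natDegree = m) ∧
      ((S (m+1)).Monic ∧ (S (m+1)).natDegree = m+1) := by
    intro m
    induction m with
    | zero => exact ⟨⟨monic_one, natDegree_one⟩, ⟨monic_X, natDegree_X⟩⟩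
    | succ k ih =>
      refine ⟨ih.2, ?_⟩
      have h1 : (Polynomial.X * S (k+1)).Monic := monic_X.mul ih.2.1
      have hd1 : (Polynomial.X * S (k+1)).natDegree = k + 2 := by
        rw [natDegree_mul X_ne_zero ih.2.1.ne_zero, natDegree_X, ih.2.2]
        omega
      have hlt : (S k).degree < (Polynomial.X * S (k+1)).degree := by
        rw [degree_eq_natDegree ih.1.1.ne_zero, degree_eq_natDegree h1.ne_zero, hd1, ih.1.2]
        exact_mod_cast Nat.lt_add_of_pos_right (by omega)
      constructor
      · rw [S_add_two]; exact h1.sub_of_left hlt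
      · rw [S_add_two, natDegree_sub_eq_left_of_natDegree_lt, hd1]
        rw [hd1, ih.1.2]; omega
  exact fun m => (key m).1

lemma S_eval (x : ℂ) (hx : x ≠ 0) :
    ∀ m : ℕ, (x - x⁻¹) * (S m).eval (x + x⁻¹) = x^(m+1) - (x⁻¹)^(m+1) := by
  have key : ∀ m : ℕ, ((x - x⁻¹) * (S m).eval (x + x⁻¹) = x^(m+1) - (x⁻¹)^(m+1)) ∧
      ((x - x⁻¹) * (S (m+1)).eval (x + x⁻¹) = x^(m+2) - (x⁻¹)^(m+2)) := by
    intro m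
    induction m with
    | zero =>
      constructor
      · simp [S]
      · show (x - x⁻¹) * (Polynomial.X).eval (x + x⁻¹) = _
        rw [eval_X]; ring
    | succ k ih =>
      refine ⟨ih.2, ?_⟩
      rw [S_add_two, eval_sub, eval_mul, eval_X, mul_sub, ← mul_assoc,
        mul_comm (x - x⁻¹) (x + x⁻¹), mul_assoc, ih.2, ih.1]
      linear_combination (x^(k+1) - x⁻¹^(k+1)) * (mul_inv_cancel₀ hx)
  exact fun m => (key m).1

lemma prod_pairs {M : Type*} [CommMonoid M] (n : ℕ) (z : Fin n → M) :
    (∏ i, z i) * ∏ i : Fin n, ∏ j ∈ Ioi i, (z i * z j) = ∏ i, z i ^ n := by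
  have h2 : (∏ i : Fin n, ∏ j ∈ Ioi i, z j) = ∏ j : Fin n, z j ^ j.val := by
    rw [Finset.prod_comm' (t' := univ) (s' := fun j => Iio j)
      (by intro i j; simp [Finset.mem_Ioi, Finset.mem_Iio])]
    exact Finset.prod_congr rfl fun j _ => by rw [prod_const, Fin.card_Iio]
  have h1 : ∀ i : Fin n, ∏ j ∈ Ioi i, (z i * z j) = z i ^ (n - 1 - i.val) * ∏ j ∈ Ioi i, z j := by
    intro i; rw [prod_mul_distrib, prod_const, Fin.card_Ioi]
  rw [Finset.prod_congr rfl fun i _ => h1 i, prod_mul_distrib, h2, ← prod_mul_distrib,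
    ← prod_mul_distrib]
  refine Finset.prod_congr rfl fun i _ => ?_
  have hn : 1 + ((n - 1 - i.val) + i.val) = n := by have := i.isLt; omega
  calc z i * (z i ^ (n - 1 - i.val) * z i ^ i.val)
      = z i ^ 1 * z i ^ ((n - 1 - i.val) + i.val) := by rw [pow_one, pow_add]
    _ = z i ^ n := by rw [← pow_add, hn]

lemma detH (n : ℕ) (x : Fin n → ℂ) (hx : ∀ i, x i ≠ 0) :
    Matrix.det (Matrix.of fun i m : Fin n => x i ^ (m.val+1) - (x i)⁻¹ ^ (m.val+1))
      = (∏ i, (x i - (x i)⁻¹)) *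
        ∏ i : Fin n, ∏ j ∈ Ioi i, ((x j + (x j)⁻¹) - (x i + (x i)⁻¹)) := by
  have hmat : (Matrix.of fun i m : Fin n => x i ^ (m.val+1) - (x i)⁻¹ ^ (m.val+1))
      = Matrix.of (fun i m : Fin n => (x i - (x i)⁻¹) *
          (Matrix.of fun i m : Fin n => (S m.val).eval (x i + (x i)⁻¹)) i m) := by
    ext i m
    simp only [Matrix.of_apply]
    exact (S_eval (x i) (hx i) m.val).symm
  rw [hmat, Matrix.det_mul_column]
  congr 1
  rw [← Matrix.det_eval_matrixOfPolynomials_eq_det_vandermonde (fun i => x i + (x i)⁻¹)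
    (fun m => S m.val) (fun m => (S_spec m.val).2) (fun m => (S_spec m.val).1),
    Matrix.det_vandermonde]



noncomputable def Ec {R : Type*} [CommRing R] {N : ℕ} (c : Fin N → R) : Polynomial R :=
  ∏ k, (1 - Polynomial.C (c k) * Polynomial.X)

lemma Ec_natDegree_le {R : Type*} [CommRing R] {N : ℕ} (c : Fin N → R) :
    (Ec c).natDegree ≤ N := by
  have h : ∀ k : Fin N, (1 - Polynomial.C (c k) * Polynomial.X).natDegree ≤ 1 := fun k => by
    refine le_trans (natDegree_sub_le _ _) ?_
    have h1 : (Polynomial.C (c k) * Polynomial.X).natDegree ≤ 1 :=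
      le_trans natDegree_mul_le (by simp [Polynomial.natDegree_X_le])
    simp [h1]
  show (∏ k, (1 - Polynomial.C (c k) * Polynomial.X)).natDegree ≤ N
  calc (∏ k, (1 - Polynomial.C (c k) * Polynomial.X)).natDegree ≤ ∑ k : Fin N, (1 - Polynomial.C (c k) * Polynomial.X).natDegree :=
        natDegree_prod_le _ _
    _ ≤ ∑ _k : Fin N, 1 := by exact Finset.sum_le_sum fun k _ => h k
    _ = N := by simp

lemma Ec_eval {R : Type*} [CommRing R] {N : ℕ} (c : Fin N → R) (z : R) :
    (Ec c).eval z = ∏ k, (1 - c k * z) := by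
  simp [Ec, eval_prod]

noncomputable def aZ {R : Type*} [CommRing R] {N : ℕ} (c : Fin N → R) : ℤ → R :=
  fun s => if 0 ≤ s then (Ec c).coeff s.toNat else 0

lemma aZ_coe {R : Type*} [CommRing R] {N : ℕ} (c : Fin N → R) (k : ℕ) : aZ c (k : ℤ) = (Ec c).coeff k := by
  simp [aZ]

lemma aZ_neg {R : Type*} [CommRing R] {N : ℕ} (c : Fin N → R) {s : ℤ} (hs : s < 0) : aZ c s = 0 := by
  simp [aZ, not_le.mpr hs]

lemma coeff_big {R : Type*} [CommRing R] {N : ℕ} (c : Fin N → R) {k : ℕ} (hk : N < k) : (Ec c).coeff k = 0 :=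
  coeff_eq_zero_of_natDegree_lt (lt_of_le_of_lt (Ec_natDegree_le c) hk)

/-- summand for the expansion -/
noncomputable def ft {N : ℕ} (c : Fin N → ℂ) (x : ℂ) (T : ℕ) (s : ℕ) : ℂ :=
  (Ec c).coeff s * (x ^ ((s : ℤ) - ((T : ℤ)+1)) - x ^ (((T : ℤ)+1) - (s : ℤ)))

lemma entry_expand {n : ℕ} (c : Fin (n+1) → ℂ) (x : ℂ) (hx : x ≠ 0) (t : Fin n) :
    x ^ (-(t.val + 1 : ℤ)) * (Ec c).eval x - x ^ ((t.val + 1 : ℤ)) * (Ec c).eval x⁻¹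
      = ∑ m : Fin n, (x ^ (m.val+1) - x⁻¹ ^ (m.val+1)) *
          (aZ c ((t.val : ℤ) + m.val + 2) - aZ c ((t.val : ℤ) - m.val)) := by
  have hxpow : ∀ (k : ℕ), x ^ k = x ^ (k : ℤ) := fun k => (zpow_natCast x k).symm
  have hxipow : ∀ (k : ℕ), x⁻¹ ^ k = x ^ (-(k : ℤ)) := fun k => by
    rw [inv_pow, ← zpow_natCast x k, ← zpow_neg]
  have hzp : ∀ a b : ℤ, x ^ a * x ^ b = x ^ (a + b) := fun a b => (zpow_add₀ hx a b).symm
  have hL : x ^ (-(t.val + 1 : ℤ)) * (Ec c).eval x - x ^ ((t.val + 1 : ℤ)) * (Ec c).eval x⁻¹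
      = ∑ s ∈ range (n+2), ft c x t.val s := by
    have hdeg : (Ec c).natDegree < n + 2 := lt_of_le_of_lt (Ec_natDegree_le c) (by omega)
    rw [eval_eq_sum_range' hdeg x, eval_eq_sum_range' hdeg x⁻¹, Finset.mul_sum, Finset.mul_sum,
      ← Finset.sum_sub_distrib]
    refine Finset.sum_congr rfl fun s _ => ?_
    rw [ft, hxpow s, hxipow s, mul_left_comm, hzp, mul_left_comm, hzp, ← mul_sub,
      show -((t.val:ℤ) + 1) + (s:ℤ) = (s:ℤ) - ((t.val:ℤ)+1) by ring,
      show ((t.val:ℤ) + 1) + -(s:ℤ) = ((t.val:ℤ)+1) - (s:ℤ) by ring]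
  rw [hL]
  have hRsplit : ∑ m : Fin n, (x ^ (m.val+1) - x⁻¹ ^ (m.val+1)) *
        (aZ c ((t.val : ℤ) + m.val + 2) - aZ c ((t.val : ℤ) - m.val))
      = (∑ m ∈ range n, (x ^ (m+1) - x⁻¹ ^ (m+1)) * aZ c ((t.val : ℤ) + m + 2))
        - ∑ m ∈ range n, (x ^ (m+1) - x⁻¹ ^ (m+1)) * aZ c ((t.val : ℤ) - m) := by
    rw [← Finset.sum_sub_distrib, Fin.sum_univ_eq_sum_range
      (fun m => (x ^ (m+1) - x⁻¹ ^ (m+1)) * (aZ c ((t.val : ℤ) + m + 2) - aZ c ((t.val : ℤ) - m)))]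
    exact Finset.sum_congr rfl fun m _ => by ring
  rw [hRsplit]
  have hS1 : (∑ m ∈ range n, (x ^ (m+1) - x⁻¹ ^ (m+1)) * aZ c ((t.val : ℤ) + m + 2))
      = ∑ s ∈ Finset.Ico (t.val+2) (n+2), ft c x t.val s := by
    have e2 : ∑ s ∈ Finset.Ico (t.val+2) (t.val+2+n), ft c x t.val s
        = ∑ m ∈ range n, (x ^ (m+1) - x⁻¹ ^ (m+1)) * aZ c ((t.val : ℤ) + m + 2) := by
      rw [Finset.sum_Ico_eq_sum_range]
      simp only [Nat.add_sub_cancel_left]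
      refine Finset.sum_congr rfl fun m _ => ?_
      rw [ft,
        show ((t.val + 2 + m : ℕ) : ℤ) - ((t.val:ℤ)+1) = ((m+1 : ℕ) : ℤ) by push_cast; ring,
        show ((t.val : ℤ) + 1) - ((t.val + 2 + m : ℕ) : ℤ) = -((m+1 : ℕ) : ℤ) by push_cast; ring,
        ← hxpow, ← hxipow,
        show ((t.val : ℤ) + m + 2) = ((t.val + 2 + m : ℕ) : ℤ) by push_cast; ring, aZ_coe]
      ring
    rw [← e2]
    refine (Finset.sum_subset (Finset.Ico_subset_Ico le_rfl (by omega)) fun s hs hns => ?_).symm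
    have h1 : n + 2 ≤ s := by
      simp only [Finset.mem_Ico] at hs hns
      omega
    rw [ft, coeff_big c (by omega), zero_mul]
  have hS2 : (∑ m ∈ range n, (x ^ (m+1) - x⁻¹ ^ (m+1)) * aZ c ((t.val : ℤ) - m))
      = -∑ s ∈ range (t.val+1), ft c x t.val s := by
    have sub1 : ∑ m ∈ range n, (x ^ (m+1) - x⁻¹ ^ (m+1)) * aZ c ((t.val : ℤ) - m)
        = ∑ m ∈ range (t.val+1), (x ^ (m+1) - x⁻¹ ^ (m+1)) * aZ c ((t.val : ℤ) - m) := by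
      refine (Finset.sum_subset (by simp only [Finset.range_subset_range]; exact t.isLt)
        fun m hm hnm => ?_).symm
      simp only [Finset.mem_range] at hm hnm
      rw [aZ_neg c (by omega), mul_zero]
    rw [sub1, ← Finset.sum_range_reflect (fun s => ft c x t.val s) (t.val+1),
      ← Finset.sum_neg_distrib]
    refine Finset.sum_congr rfl fun m hm => ?_
    simp only [Finset.mem_range] at hm
    have hmt : m ≤ t.val := by omega
    rw [Nat.add_sub_cancel, ft,
      show ((t.val - m : ℕ) : ℤ) - ((t.val : ℤ)+1) = -((m+1 : ℕ) : ℤ) by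
        push_cast [Nat.cast_sub hmt]; ring,
      show ((t.val : ℤ)+1) - ((t.val - m : ℕ) : ℤ) = ((m+1 : ℕ) : ℤ) by
        push_cast [Nat.cast_sub hmt]; ring,
      ← hxpow, ← hxipow,
      show ((t.val : ℤ) - m) = ((t.val - m : ℕ) : ℤ) by push_cast [Nat.cast_sub hmt]; ring,
      aZ_coe]
    ring
  rw [hS1, hS2, sub_neg_eq_add]
  have hdec : ∑ s ∈ range (n+2), ft c x t.val s
      = (∑ s ∈ range (t.val+1), ft c x t.val s)
        + ((ft c x t.val (t.val+1)) + ∑ s ∈ Finset.Ico (t.val+2) (n+2), ft c x t.val s) := by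
    rw [Finset.range_eq_Ico, ← Finset.sum_Ico_consecutive (fun s => ft c x t.val s)
      (Nat.zero_le (t.val+1)) (by omega : t.val+1 ≤ n+2), ← Finset.range_eq_Ico]
    congr 1
    rw [Finset.sum_eq_sum_Ico_succ_bot (by omega : t.val+1 < n+2)]
  have hmid : ft c x t.val (t.val+1) = 0 := by
    rw [ft,
      show ((t.val+1 : ℕ) : ℤ) - ((t.val : ℤ)+1) = 0 by push_cast; ring,
      show ((t.val : ℤ)+1) - ((t.val+1 : ℕ) : ℤ) = 0 by push_cast; ring]
    simp
  rw [hdec, hmid, zero_add, add_comm]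

/-- symmetric full product = diag * (upper)² -/
lemma full_square {n : ℕ} (f : Fin n → Fin n → ℂ) (hsym : ∀ i j, f i j = f j i) :
    (∏ i, ∏ j, f i j) = (∏ i, f i i) * (∏ i, ∏ j ∈ Ioi i, f i j) ^ 2 := by
  have herase : ∀ i : Fin n, (univ : Finset (Fin n)).erase i = Iio i ∪ Ioi i := by
    intro i; ext j
    simp only [Finset.mem_erase, Finset.mem_univ, and_true, Finset.mem_union,
      Finset.mem_Iio, Finset.mem_Ioi]
    exact ne_iff_lt_or_gt
  have hdisj : ∀ i : Fin n, Disjoint (Iio i) (Ioi i) := fun i =>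
    Finset.disjoint_left.mpr fun j hj hj' => absurd (Finset.mem_Ioi.mp hj')
      (not_lt_of_gt (Finset.mem_Iio.mp hj))
  have hstep : ∀ i : Fin n, (∏ j, f i j)
      = f i i * ((∏ j ∈ Iio i, f i j) * ∏ j ∈ Ioi i, f i j) := by
    intro i
    rw [← Finset.mul_prod_erase univ (f i) (Finset.mem_univ i), herase i,
      Finset.prod_union (hdisj i)]
  rw [Finset.prod_congr rfl fun i _ => hstep i, Finset.prod_mul_distrib,
    Finset.prod_mul_distrib]
  have hswap : (∏ i, ∏ j ∈ Iio i, f i j) = ∏ i, ∏ j ∈ Ioi i, f i j := by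
    rw [Finset.prod_comm' (t' := univ) (s' := fun j => Ioi j)
      (by intro i j; simp [Finset.mem_Ioi, Finset.mem_Iio])]
    exact Finset.prod_congr rfl fun j _ => Finset.prod_congr rfl fun i _ => hsym i j
  rw [hswap, sq]

lemma Ioi_castSucc' {n : ℕ} (i : Fin n) :
    Ioi (Fin.castSucc i) = insert (Fin.last n) ((Ioi i).map Fin.castSuccEmb) := by
  ext β
  simp only [Finset.mem_Ioi, Finset.mem_insert, Finset.mem_map, Fin.castSuccEmb_apply]
  refine Fin.lastCases ?_ (fun j => ?_) β
  · simp [Fin.castSucc_lt_last]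
  · simp only [Fin.castSucc_lt_castSucc_iff]
    constructor
    · intro h; exact Or.inr ⟨j, h, rfl⟩
    · rintro (h | ⟨b, hb, hbe⟩)
      · exact absurd h (Fin.castSucc_lt_last j).ne
      · rw [← Fin.castSucc_inj.mp hbe]; exact hb

lemma Ioi_last' {n : ℕ} : Ioi (Fin.last n) = (∅ : Finset (Fin (n+1))) := by
  ext β; simp [Finset.mem_Ioi, (Fin.le_last β).not_gt]

/-- splitting the pair product over Fin (n+1) -/
lemma pair_split {n : ℕ} (G : Fin (n+1) → Fin (n+1) → ℂ) :
    (∏ α, ∏ β ∈ Ioi α, G α β)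
      = (∏ i : Fin n, ∏ j ∈ Ioi i, G (Fin.castSucc i) (Fin.castSucc j))
        * ∏ i : Fin n, G (Fin.castSucc i) (Fin.last n) := by
  rw [Fin.prod_univ_castSucc (fun α => ∏ β ∈ Ioi α, G α β), Ioi_last', Finset.prod_empty,
    mul_one]
  have : ∀ i : Fin n, (∏ β ∈ Ioi (Fin.castSucc i), G (Fin.castSucc i) β)
      = G (Fin.castSucc i) (Fin.last n)
        * ∏ j ∈ Ioi i, G (Fin.castSucc i) (Fin.castSucc j) := by
    intro i
    rw [Ioi_castSucc', Finset.prod_insert (by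
      simp only [Finset.mem_map, Fin.castSuccEmb_apply]
      rintro ⟨b, _, hb⟩
      exact absurd hb (Fin.castSucc_lt_last b).ne), Finset.prod_map]
    rfl
  rw [Finset.prod_congr rfl fun i _ => this i, Finset.prod_mul_distrib, mul_comm]


noncomputable def Hmat (n : ℕ) (x : Fin n → ℂ) : Matrix (Fin n) (Fin n) ℂ :=
  Matrix.of fun i m => x i ^ (m.val+1) - (x i)⁻¹ ^ (m.val+1)

noncomputable def Bmat {R : Type*} [CommRing R] (n : ℕ) (c : Fin (n+1) → R) : Matrix (Fin n) (Fin n) R :=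
  Matrix.of fun m t => aZ c ((t.val : ℤ) + m.val + 2) - aZ c ((t.val : ℤ) - m.val)

noncomputable def Fmat (n : ℕ) (c : Fin (n+1) → ℂ) (x : Fin n → ℂ) : Matrix (Fin n) (Fin n) ℂ :=
  Matrix.of fun i t => x i ^ (-(t.val + 1 : ℤ)) * (Ec c).eval (x i)
    - x i ^ ((t.val + 1 : ℤ)) * (Ec c).eval ((x i)⁻¹)

lemma Fmat_eq {n : ℕ} (c : Fin (n+1) → ℂ) (x : Fin n → ℂ) (hx : ∀ i, x i ≠ 0) :
    Fmat n c x = Hmat n x * Bmat n c := by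
  ext i t
  simp only [Fmat, Hmat, Bmat, Matrix.mul_apply, Matrix.of_apply]
  exact entry_expand c (x i) (hx i) t

lemma detH' {n : ℕ} (x : Fin n → ℂ) (hx : ∀ i, x i ≠ 0) :
    (Hmat n x).det = (∏ i, (x i - (x i)⁻¹)) *
      ∏ i : Fin n, ∏ j ∈ Ioi i, ((x j + (x j)⁻¹) - (x i + (x i)⁻¹)) :=
  detH n x hx

lemma detB_generic (n : ℕ) (c : Fin (n+1) → ℂ) (h0 : ∀ k, c k ≠ 0)
    (h1 : ∀ k, (c k)^2 ≠ 1) (h3 : Function.Injective c)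
    (h4 : ∀ k l, k ≠ l → c k * c l ≠ 1) :
    (Bmat n c).det = (-1:ℂ)^n * ∏ α, ∏ β ∈ Ioi α, (1 - c α * c β) := by
  classical
  set u : Fin n → ℂ := fun i => c i.castSucc with hu
  set x : Fin n → ℂ := fun i => (u i)⁻¹ with hxdef
  have hu0 : ∀ i, u i ≠ 0 := fun i => h0 _
  have hx : ∀ i, x i ≠ 0 := fun i => inv_ne_zero (hu0 i)
  have hxinv : ∀ i, (x i)⁻¹ = u i := fun i => inv_inv (u i)
  -- W i
  set W : Fin n → ℂ := fun i => ∏ k, (1 - c k * u i) with hWdef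
  have hW : ∀ i, (Ec c).eval ((x i)⁻¹) = W i := by
    intro i; rw [hxinv, Ec_eval]
  have hE0 : ∀ i, (Ec c).eval (x i) = 0 := by
    intro i
    rw [Ec_eval]
    refine Finset.prod_eq_zero (Finset.mem_univ i.castSucc) ?_
    show 1 - u i * x i = 0
    rw [hxdef]
    simp only
    rw [mul_inv_cancel₀ (hu0 i), sub_self]
  -- entries of F
  have hentry : ∀ i t : Fin n, Fmat n c x i t
      = (-W i * (u i)⁻¹) * Matrix.vandermonde (fun i => (u i)⁻¹) i t := by
    intro i t
    simp only [Fmat, Matrix.of_apply, Matrix.vandermonde_apply]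
    rw [hE0 i, mul_zero, zero_sub, hW i]
    rw [show ((t.val : ℤ) + 1) = ((t.val + 1 : ℕ) : ℤ) by push_cast; ring, zpow_natCast]
    rw [hxdef]
    simp only
    rw [pow_succ]
    ring
  -- det F
  have hdetF : (Fmat n c x).det
      = (∏ i, (-W i * (u i)⁻¹)) * ∏ i : Fin n, ∏ j ∈ Ioi i, ((u j)⁻¹ - (u i)⁻¹) := by
    have : Fmat n c x = Matrix.of (fun i t => (-W i * (u i)⁻¹) *
        Matrix.vandermonde (fun i => (u i)⁻¹) i t) := by
      ext i t; exact hentry i t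
    rw [this, Matrix.det_mul_column, Matrix.det_vandermonde]
  -- pointwise identities
  have hyd : ∀ i j : Fin n, ((x j + (x j)⁻¹) - (x i + (x i)⁻¹))
      = ((u j)⁻¹ - (u i)⁻¹) * (1 - u i * u j) := by
    intro i j
    rw [hxinv, hxinv, hxdef]
    simp only
    field_simp [hu0 i, hu0 j]
    ring
  have hfac : ∀ i : Fin n, x i - (x i)⁻¹ = (u i)⁻¹ - u i := by
    intro i; rw [hxinv, hxdef]
  have hfac2 : ∀ i : Fin n, (u i)⁻¹ - u i = (u i)⁻¹ * (1 - (u i)^2) := by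
    intro i; field_simp [hu0 i]
  -- CI : the product of the W i
  have hCI : (∏ i, W i) = (∏ i, (1 - (u i)^2)) *
      (∏ i : Fin n, ∏ j ∈ Ioi i, (1 - u i * u j)) ^ 2 * ∏ i, (1 - u i * c (Fin.last n)) := by
    have hWsplit : ∀ i, W i
        = (∏ k : Fin n, (1 - u i * u k)) * (1 - u i * c (Fin.last n)) := by
      intro i
      rw [hWdef]
      simp only
      rw [Fin.prod_univ_castSucc (fun k => (1 - c k * u i))]
      congr 1
      · exact Finset.prod_congr rfl fun k _ => by rw [hu]; simp only; ring
      · ring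
    rw [Finset.prod_congr rfl fun i _ => hWsplit i, Finset.prod_mul_distrib]
    congr 1
    rw [full_square (fun a b => 1 - u a * u b) (fun a b => by ring)]
    congr 1
    exact Finset.prod_congr rfl fun i _ => by rw [sq]
  -- SL : split of the pair product over Fin (n+1)
  have hSL : (∏ α, ∏ β ∈ Ioi α, (1 - c α * c β))
      = (∏ i : Fin n, ∏ j ∈ Ioi i, (1 - u i * u j)) * ∏ i, (1 - u i * c (Fin.last n)) := by
    exact pair_split (fun α β => 1 - c α * c β)
  -- nonvanishing of det H
  have hf1ne : ∀ i : Fin n, (u i)⁻¹ - u i ≠ 0 := by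
    intro i heq
    apply h1 i.castSucc
    have h' : (u i)⁻¹ = u i := sub_eq_zero.mp heq
    have : u i * (u i)⁻¹ = u i * u i := by rw [h']
    rw [mul_inv_cancel₀ (hu0 i)] at this
    show u i ^ 2 = 1
    rw [sq, ← this]
  have hf2ne : ∀ i j : Fin n, i < j → ((u j)⁻¹ - (u i)⁻¹) * (1 - u i * u j) ≠ 0 := by
    intro i j hij
    have hne : i.castSucc ≠ j.castSucc := by
      simp only [ne_eq, Fin.castSucc_inj]
      exact hij.ne
    apply mul_ne_zero
    · intro heq
      have h' : (u j)⁻¹ = (u i)⁻¹ := sub_eq_zero.mp heq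
      exact hne ((h3 (inv_injective h')).symm)
    · intro heq
      have h' : u i * u j = 1 := by
        have := sub_eq_zero.mp heq
        exact this.symm
      exact h4 _ _ hne h'
  have hdetHne : (Hmat n x).det ≠ 0 := by
    rw [detH' x hx]
    apply mul_ne_zero
    · rw [Finset.prod_ne_zero_iff]
      intro i _
      rw [hfac i]
      exact hf1ne i
    · rw [Finset.prod_ne_zero_iff]
      intro i _
      rw [Finset.prod_ne_zero_iff]
      intro j hj
      rw [hyd i j]
      exact hf2ne i j (Finset.mem_Ioi.mp hj)
  -- the key product identity
  have hkey : (Hmat n x).det * ((-1:ℂ)^n * ∏ α, ∏ β ∈ Ioi α, (1 - c α * c β))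
      = (Fmat n c x).det := by
    rw [detH' x hx, hdetF, hSL]
    rw [Finset.prod_congr rfl fun i _ => hfac i,
      Finset.prod_congr rfl fun i _ => Finset.prod_congr rfl fun j _ => hyd i j]
    have e1 : (∏ i : Fin n, ∏ j ∈ Ioi i, ((u j)⁻¹ - (u i)⁻¹) * (1 - u i * u j))
        = (∏ i : Fin n, ∏ j ∈ Ioi i, ((u j)⁻¹ - (u i)⁻¹))
          * ∏ i : Fin n, ∏ j ∈ Ioi i, (1 - u i * u j) := by
      rw [← Finset.prod_mul_distrib]
      exact Finset.prod_congr rfl fun i _ => Finset.prod_mul_distrib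
    have hm1 : (∏ _i : Fin n, (-1:ℂ)) = (-1:ℂ)^n := by simp
    have e2 : (∏ i, (-W i * (u i)⁻¹)) = (-1:ℂ)^n * ∏ i, ((u i)⁻¹ * W i) := by
      rw [← hm1, ← Finset.prod_mul_distrib]
      exact Finset.prod_congr rfl fun i _ => by ring
    rw [e1, e2, Finset.prod_mul_distrib, hCI]
    have e3 : (∏ i, ((u i)⁻¹ - u i)) = ∏ i, ((u i)⁻¹ * (1 - (u i)^2)) :=
      Finset.prod_congr rfl fun i _ => hfac2 i
    rw [e3, Finset.prod_mul_distrib]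
    ring
  -- conclude
  have hFHB : (Fmat n c x).det = (Hmat n x).det * (Bmat n c).det := by
    rw [Fmat_eq c x hx, Matrix.det_mul]
  apply mul_left_cancel₀ hdetHne
  rw [hkey, hFHB]

lemma Ec_map {R S : Type*} [CommRing R] [CommRing S] (φ : R →+* S) {N : ℕ} (c : Fin N → R) :
    (Ec c).map φ = Ec (fun k => φ (c k)) := by
  rw [Ec, Ec, Polynomial.map_prod]
  exact Finset.prod_congr rfl fun k _ => by
    rw [Polynomial.map_sub, Polynomial.map_one, Polynomial.map_mul, Polynomial.map_C,
      Polynomial.map_X]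

lemma aZ_map {R S : Type*} [CommRing R] [CommRing S] (φ : R →+* S) {N : ℕ} (c : Fin N → R)
    (s : ℤ) : φ (aZ c s) = aZ (fun k => φ (c k)) s := by
  simp only [aZ]
  by_cases h : 0 ≤ s
  · simp only [if_pos h, ← Polynomial.coeff_map, Ec_map]
  · simp only [if_neg h, map_zero]

lemma Bmat_map {R S : Type*} [CommRing R] [CommRing S] (φ : R →+* S) {n : ℕ}
    (c : Fin (n+1) → R) : (Bmat n c).map φ = Bmat n (fun k => φ (c k)) := by
  ext m t
  simp only [Bmat, Matrix.map_apply, Matrix.of_apply, map_sub, aZ_map]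

lemma detB_all (n : ℕ) (c : Fin (n+1) → ℂ) :
    (Bmat n c).det = (-1:ℂ)^n * ∏ α, ∏ β ∈ Ioi α, (1 - c α * c β) := by
  classical
  set cp : Fin (n+1) → Polynomial ℂ :=
    fun k => Polynomial.C ((k.val : ℂ)+1) * Polynomial.X + Polynomial.C (c k) with hcp
  have hcoeffne : ∀ k : Fin (n+1), ((k.val : ℂ)+1) ≠ 0 := fun k =>
    Nat.cast_add_one_ne_zero k.val
  have hcoeff1 : ∀ k, (cp k).coeff 1 = (k.val : ℂ)+1 := by
    intro k; simp [hcp, coeff_add, coeff_C, coeff_C_mul]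
  have hcpne : ∀ k, cp k ≠ 0 := fun k h => hcoeffne k (by rw [← hcoeff1 k, h, coeff_zero])
  have hdeg : ∀ k, (cp k).natDegree = 1 := fun k => Polynomial.natDegree_linear (hcoeffne k)
  have heval0 : ∀ k, (cp k).eval 0 = c k := fun k => by simp [hcp]
  set p : Polynomial ℂ := (Bmat n cp).det with hp
  set q : Polynomial ℂ := Polynomial.C ((-1:ℂ)^n) *
      ∏ α, ∏ β ∈ Ioi α, (1 - cp α * cp β) with hq
  -- bad set
  set Bad : Set ℂ :=
    (⋃ k : Fin (n+1), {ε : ℂ | (cp k).eval ε = 0})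
    ∪ (⋃ k : Fin (n+1), {ε : ℂ | (cp k - 1).eval ε = 0})
    ∪ (⋃ k : Fin (n+1), {ε : ℂ | (cp k + 1).eval ε = 0})
    ∪ (⋃ kl : Fin (n+1) × Fin (n+1), {ε : ℂ | kl.1 ≠ kl.2 ∧ (cp kl.1 - cp kl.2).eval ε = 0})
    ∪ (⋃ kl : Fin (n+1) × Fin (n+1), {ε : ℂ | kl.1 ≠ kl.2 ∧ (cp kl.1 * cp kl.2 - 1).eval ε = 0})
    with hBad
  have hroot : ∀ (r : Polynomial ℂ), r ≠ 0 → ({ε : ℂ | r.eval ε = 0}).Finite := by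
    intro r hr
    exact Polynomial.finite_setOf_isRoot hr
  have hBadFin : Bad.Finite := by
    refine (((((Set.finite_iUnion fun k => hroot _ ?_).union
      (Set.finite_iUnion fun k => hroot _ ?_)).union
      (Set.finite_iUnion fun k => hroot _ ?_)).union
      (Set.finite_iUnion fun kl => ?_)).union
      (Set.finite_iUnion fun kl => ?_))
    · exact hcpne k
    · intro h
      apply hcoeffne k
      have : (cp k - 1).coeff 1 = (k.val : ℂ)+1 := by
        rw [coeff_sub, hcoeff1]; simp [Polynomial.coeff_one]
      rw [← this, h, coeff_zero]
    · intro h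
      apply hcoeffne k
      have : (cp k + 1).coeff 1 = (k.val : ℂ)+1 := by
        rw [coeff_add, hcoeff1]; simp [Polynomial.coeff_one]
      rw [← this, h, coeff_zero]
    · by_cases hkl : kl.1 = kl.2
      · convert Set.finite_empty
        ext ε; simp [hkl]
      · refine (hroot (cp kl.1 - cp kl.2) ?_).subset fun ε hε => hε.2
        intro h
        have hc1 : (cp kl.1 - cp kl.2).coeff 1 = ((kl.1.val : ℂ)+1) - ((kl.2.val : ℂ)+1) := by
          rw [coeff_sub, hcoeff1, hcoeff1]
        rw [h, coeff_zero] at hc1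
        have : (kl.1.val : ℂ) = (kl.2.val : ℂ) := by linear_combination -hc1
        exact hkl (Fin.ext (Nat.cast_inj.mp this))
    · by_cases hkl : kl.1 = kl.2
      · convert Set.finite_empty
        ext ε; simp [hkl]
      · refine (hroot (cp kl.1 * cp kl.2 - 1) ?_).subset fun ε hε => hε.2
        intro h
        have h2 : cp kl.1 * cp kl.2 = 1 := sub_eq_zero.mp (by rw [← h])
        have hd2 : (cp kl.1 * cp kl.2).natDegree = 2 := by
          rw [Polynomial.natDegree_mul (hcpne kl.1) (hcpne kl.2), hdeg, hdeg]
        rw [h2, Polynomial.natDegree_one] at hd2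
        exact (by omega : ¬ (0 = 2)) hd2
  -- agreement off Bad
  have hagree : ∀ ε : ℂ, ε ∉ Bad → p.eval ε = q.eval ε := by
    intro ε hε
    simp only [hBad, Set.mem_union, Set.mem_iUnion, Set.mem_setOf_eq, not_or, not_exists] at hε
    obtain ⟨⟨⟨⟨hb1, hb2⟩, hb3⟩, hb4⟩, hb5⟩ := hε
    set cε : Fin (n+1) → ℂ := fun k => (cp k).eval ε with hce
    have h0 : ∀ k, cε k ≠ 0 := fun k => hb1 k
    have h1 : ∀ k, (cε k)^2 ≠ 1 := by
      intro k h
      have : (cε k - 1) * (cε k + 1) = 0 := by linear_combination h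
      rcases mul_eq_zero.mp this with h' | h'
      · exact hb2 k (by rw [Polynomial.eval_sub, Polynomial.eval_one]; exact h')
      · exact hb3 k (by rw [Polynomial.eval_add, Polynomial.eval_one]; exact h')
    have h3 : Function.Injective cε := by
      intro a b hab
      by_contra hne
      exact hb4 (a, b) ⟨hne, by rw [Polynomial.eval_sub]; rw [sub_eq_zero]; exact hab⟩
    have h4 : ∀ k l, k ≠ l → cε k * cε l ≠ 1 := by
      intro k l hne h
      exact hb5 (k, l) ⟨hne, by
        rw [Polynomial.eval_sub, Polynomial.eval_mul, Polynomial.eval_one, sub_eq_zero]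
        exact h⟩
    have hmapdet : p.eval ε = (Bmat n cε).det := by
      rw [hp]
      have := RingHom.map_det (Polynomial.evalRingHom ε) (Bmat n cp)
      rw [RingHom.mapMatrix_apply, Bmat_map] at this
      simp only [Polynomial.coe_evalRingHom] at this
      exact this
    rw [hmapdet, detB_generic n cε h0 h1 h3 h4, hq]
    rw [Polynomial.eval_mul, Polynomial.eval_C, Polynomial.eval_prod]
    congr 1
    refine Finset.prod_congr rfl fun α _ => ?_
    rw [Polynomial.eval_prod]
    exact Finset.prod_congr rfl fun β _ => by
      rw [Polynomial.eval_sub, Polynomial.eval_one, Polynomial.eval_mul]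
  have hinf : Set.Infinite {ε : ℂ | p.eval ε = q.eval ε} :=
    (hBadFin.infinite_compl).mono fun ε hε => hagree ε hε
  have hpq : p = q := Polynomial.eq_of_infinite_eval_eq p q hinf
  -- evaluate at 0
  have e1 : p.eval 0 = (Bmat n c).det := by
    rw [hp]
    have := RingHom.map_det (Polynomial.evalRingHom 0) (Bmat n cp)
    rw [RingHom.mapMatrix_apply, Bmat_map] at this
    simp only [Polynomial.coe_evalRingHom] at this
    have h2 : (fun k => Polynomial.eval 0 (cp k)) = c := funext fun k => heval0 k
    rw [h2] at this
    exact this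
  have e2 : q.eval 0 = (-1:ℂ)^n * ∏ α, ∏ β ∈ Ioi α, (1 - c α * c β) := by
    rw [hq, Polynomial.eval_mul, Polynomial.eval_C, Polynomial.eval_prod]
    congr 1
    refine Finset.prod_congr rfl fun α _ => ?_
    rw [Polynomial.eval_prod]
    exact Finset.prod_congr rfl fun β _ => by
      rw [Polynomial.eval_sub, Polynomial.eval_one, Polynomial.eval_mul, heval0, heval0]
  rw [← e1, hpq, e2]

lemma detH_closed {n : ℕ} (x : Fin n → ℂ) (hx : ∀ i, x i ≠ 0) :
    (Hmat n x).det = (-1:ℂ)^n * (∏ i, x i ^ (-(n:ℤ)) * (1 - x i^2)) *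
      ∏ i : Fin n, ∏ j ∈ Ioi i, ((x i - x j) * (1 - x i * x j)) := by
  rw [detH' x hx]
  have p1 : ∀ i, x i - (x i)⁻¹ = (-1:ℂ) * ((x i)⁻¹ * (1 - x i^2)) := fun i => by
    field_simp [hx i]; ring
  have p2 : ∀ i j : Fin n, ((x j + (x j)⁻¹) - (x i + (x i)⁻¹))
      = ((x i)⁻¹ * (x j)⁻¹) * ((x i - x j) * (1 - x i * x j)) := fun i j => by
    field_simp [hx i, hx j]; ring
  have hzpow : ∀ i, x i ^ (-(n:ℤ)) = ((x i)⁻¹)^n := fun i => by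
    rw [zpow_neg, zpow_natCast, inv_pow]
  have e1 : (∏ i, (x i - (x i)⁻¹))
      = (∏ _i : Fin n, (-1:ℂ)) * ((∏ i, (x i)⁻¹) * ∏ i, (1 - x i^2)) := by
    rw [← Finset.prod_mul_distrib, ← Finset.prod_mul_distrib]
    exact Finset.prod_congr rfl fun i _ => p1 i
  have e2 : (∏ i : Fin n, ∏ j ∈ Ioi i, ((x j + (x j)⁻¹) - (x i + (x i)⁻¹)))
      = (∏ i : Fin n, ∏ j ∈ Ioi i, ((x i)⁻¹ * (x j)⁻¹))
        * ∏ i : Fin n, ∏ j ∈ Ioi i, ((x i - x j) * (1 - x i * x j)) := by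
    rw [← Finset.prod_mul_distrib]
    refine Finset.prod_congr rfl fun i _ => ?_
    rw [← Finset.prod_mul_distrib]
    exact Finset.prod_congr rfl fun j _ => p2 i j
  have hpp := prod_pairs n (fun i => (x i)⁻¹)
  have e3 : (∏ i, (x i ^ (-(n:ℤ)) * (1 - x i^2)))
      = (∏ i, ((x i)⁻¹)^n) * ∏ i, (1 - x i^2) := by
    rw [← Finset.prod_mul_distrib]
    exact Finset.prod_congr rfl fun i _ => by rw [hzpow i]
  have e4 : (∏ _i : Fin n, (-1:ℂ)) = (-1:ℂ)^n := by simp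
  rw [e1, e2, e3, e4, ← hpp]
  ring

theorem main_thm (n : ℕ) (hn : 1 ≤ n)
    (x : Fin n → ℂ) (hx : ∀ i, x i ≠ 0) (c : Fin (n + 1) → ℂ)
    (P : Fin n → Polynomial ℂ)
    (hdeg : ∀ j : Fin n, (P j).natDegree ≤ j.val) :
    Matrix.det (Matrix.of fun i j : Fin n =>
      x i ^ (-(j.val + 1 : ℤ)) * (∏ k, (1 - c k * x i)) * (P j).eval (x i)
        - x i ^ (j.val + 1 : ℤ) * (∏ k, (1 - c k / x i)) * (P j).eval (1 / x i))
    = (∏ i, (P i).eval 0) *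
        (∏ i : Fin (n + 1), ∏ j ∈ Finset.Ioi i, (1 - c i * c j)) *
        (∏ i, x i ^ (-(n : ℤ)) * (1 - x i ^ 2)) *
        ∏ i : Fin n, ∏ j ∈ Finset.Ioi i, (x i - x j) * (1 - x i * x j) := by
  classical
  set U : Matrix (Fin n) (Fin n) ℂ :=
    Matrix.of (fun t j : Fin n => if t.val ≤ j.val then (P j).coeff (j.val - t.val) else 0)
    with hU
  -- column expansion : the given matrix equals Fmat * U
  have hcol : (Matrix.of fun i j : Fin n =>
      x i ^ (-(j.val + 1 : ℤ)) * (∏ k, (1 - c k * x i)) * (P j).eval (x i)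
        - x i ^ (j.val + 1 : ℤ) * (∏ k, (1 - c k / x i)) * (P j).eval (1 / x i))
      = Fmat n c x * U := by
    ext i j
    simp only [Matrix.of_apply, Matrix.mul_apply, Fmat, hU]
    -- abbreviations
    have hxi := hx i
    have hzp : ∀ a b : ℤ, x i ^ a * x i ^ b = x i ^ (a + b) :=
      fun a b => (zpow_add₀ hxi a b).symm
    have hEx : (∏ k, (1 - c k * x i)) = (Ec c).eval (x i) := (Ec_eval c (x i)).symm
    have hExi : (∏ k, (1 - c k / x i)) = (Ec c).eval ((x i)⁻¹) := by
      rw [Ec_eval]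
      exact Finset.prod_congr rfl fun k _ => by rw [div_eq_mul_inv]
    have h1x : (1 : ℂ) / x i = (x i)⁻¹ := one_div (x i)
    rw [hEx, hExi, h1x]
    -- convert RHS sum over Fin n to range n then restrict to range (j+1)
    have hconv : ∑ t : Fin n, (x i ^ (-(t.val + 1 : ℤ)) * (Ec c).eval (x i)
          - x i ^ ((t.val + 1 : ℤ)) * (Ec c).eval ((x i)⁻¹)) *
          (if t.val ≤ j.val then (P j).coeff (j.val - t.val) else 0)
        = ∑ t ∈ range (j.val+1), (x i ^ (-(t + 1 : ℤ)) * (Ec c).eval (x i)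
          - x i ^ ((t + 1 : ℤ)) * (Ec c).eval ((x i)⁻¹)) * (P j).coeff (j.val - t) := by
      rw [Fin.sum_univ_eq_sum_range (fun t => (x i ^ (-(t + 1 : ℤ)) * (Ec c).eval (x i)
          - x i ^ ((t + 1 : ℤ)) * (Ec c).eval ((x i)⁻¹)) *
          (if t ≤ j.val then (P j).coeff (j.val - t) else 0))]
      rw [← Finset.sum_subset (Finset.range_subset_range.mpr (by omega : j.val + 1 ≤ n))
        (fun t _ hnt => by
          rw [if_neg (by simp only [Finset.mem_range] at hnt; omega), mul_zero])]
      exact Finset.sum_congr rfl fun t ht => by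
        rw [if_pos (by simp only [Finset.mem_range] at ht; omega)]
    rw [hconv]
    -- reflect the sum
    have hrefl : ∑ t ∈ range (j.val+1), (x i ^ (-(t + 1 : ℤ)) * (Ec c).eval (x i)
          - x i ^ ((t + 1 : ℤ)) * (Ec c).eval ((x i)⁻¹)) * (P j).coeff (j.val - t)
        = ∑ m ∈ range (j.val+1), (x i ^ (-((j.val - m : ℕ) + 1 : ℤ)) * (Ec c).eval (x i)
          - x i ^ (((j.val - m : ℕ) + 1 : ℤ)) * (Ec c).eval ((x i)⁻¹)) * (P j).coeff m := by
      rw [← Finset.sum_range_reflect]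
      refine Finset.sum_congr rfl fun m hm => ?_
      simp only [Finset.mem_range] at hm
      have hmj : m ≤ j.val := by omega
      rw [Nat.add_sub_cancel]
      congr 2
      omega
    rw [hrefl]
    -- expand evals of P
    have hPd : (P j).natDegree < j.val + 1 := Nat.lt_succ_of_le (hdeg j)
    rw [eval_eq_sum_range' hPd (x i), eval_eq_sum_range' hPd ((x i)⁻¹),
      Finset.mul_sum, Finset.mul_sum, ← Finset.sum_sub_distrib]
    refine Finset.sum_congr rfl fun m hm => ?_
    simp only [Finset.mem_range] at hm
    have hmj : m ≤ j.val := by omega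
    have hxpow : x i ^ m = x i ^ (m : ℤ) := (zpow_natCast (x i) m).symm
    have hxipow : (x i)⁻¹ ^ m = x i ^ (-(m : ℤ)) := by
      rw [inv_pow, ← zpow_natCast (x i) m, ← zpow_neg]
    rw [hxpow, hxipow]
    rw [show x i ^ (-(j.val + 1 : ℤ)) * (Ec c).eval (x i) * ((P j).coeff m * x i ^ (m:ℤ))
        = ((x i ^ (-(j.val + 1 : ℤ)) * x i ^ (m:ℤ)) * (Ec c).eval (x i)) * (P j).coeff m
        by ring,
      show x i ^ ((j.val + 1 : ℤ)) * (Ec c).eval ((x i)⁻¹) * ((P j).coeff m * x i ^ (-(m:ℤ)))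
        = ((x i ^ ((j.val + 1 : ℤ)) * x i ^ (-(m:ℤ))) * (Ec c).eval ((x i)⁻¹)) * (P j).coeff m
        by ring,
      hzp, hzp,
      show (-(j.val + 1 : ℤ) + (m:ℤ)) = -((j.val - m : ℕ) + 1 : ℤ) by
        push_cast [Nat.cast_sub hmj]; ring,
      show ((j.val + 1 : ℤ) + -(m:ℤ)) = ((j.val - m : ℕ) + 1 : ℤ) by
        push_cast [Nat.cast_sub hmj]; ring]
    ring
  rw [hcol, Matrix.det_mul]
  -- det U : upper triangular
  have hUtri : U.BlockTriangular id := by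
    intro t j hji
    simp only [hU, Matrix.of_apply, id_eq] at hji ⊢
    rw [if_neg]
    exact fun h => absurd (Fin.lt_iff_val_lt_val.mp hji) (by omega)
  have hdetU : U.det = ∏ j, (P j).eval 0 := by
    rw [Matrix.det_of_upperTriangular hUtri]
    refine Finset.prod_congr rfl fun j _ => ?_
    simp only [hU, Matrix.of_apply, if_pos (le_refl j.val), Nat.sub_self]
    exact Polynomial.coeff_zero_eq_eval_zero (P j)
  rw [hdetU, Fmat_eq c x hx, Matrix.det_mul, detH_closed x hx, detB_all n c]
  have hsq : (-1:ℂ)^n * (-1:ℂ)^n = 1 := by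
    rw [← pow_add, ← two_mul, pow_mul]
    norm_num
  calc ((-1:ℂ)^n * (∏ i, x i ^ (-(n:ℤ)) * (1 - x i^2)) *
          ∏ i : Fin n, ∏ j ∈ Ioi i, ((x i - x j) * (1 - x i * x j)))
        * ((-1:ℂ)^n * ∏ α, ∏ β ∈ Ioi α, (1 - c α * c β)) * (∏ j, (P j).eval 0)
      = ((-1:ℂ)^n * (-1:ℂ)^n) * ((∏ j, (P j).eval 0) *
          (∏ α, ∏ β ∈ Ioi α, (1 - c α * c β)) *
          (∏ i, x i ^ (-(n:ℤ)) * (1 - x i^2)) *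
          ∏ i : Fin n, ∏ j ∈ Ioi i, ((x i - x j) * (1 - x i * x j))) := by ring
    _ = _ := by rw [hsq, one_mul]

end Stmt17

open Finset Polynomial

theorem stmt_17 (n : ℕ) (hn : 1 ≤ n)
    (x : Fin n → ℂ) (hx : ∀ i, x i ≠ 0) (c : Fin (n + 1) → ℂ)
    (P : Fin n → Polynomial ℂ)
    (hdeg : ∀ j : Fin n, (P j).natDegree ≤ j.val) :
    Matrix.det (Matrix.of fun i j : Fin n =>
      x i ^ (-(j.val + 1 : ℤ)) * (∏ k, (1 - c k * x i)) * (P j).eval (x i)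
        - x i ^ (j.val + 1 : ℤ) * (∏ k, (1 - c k / x i)) * (P j).eval (1 / x i))
    = (∏ i, (P i).eval 0) *
        (∏ i : Fin (n + 1), ∏ j ∈ Finset.Ioi i, (1 - c i * c j)) *
        (∏ i, x i ^ (-(n : ℤ)) * (1 - x i ^ 2)) *
        ∏ i : Fin n, ∏ j ∈ Finset.Ioi i, (x i - x j) * (1 - x i * x j) := by
  exact Stmt17.main_thm n hn x hx c P hdeg
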